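/- Let d, n ≥ 1, α ∈ (0,1), and let s : X_NA × ℝ → ℝ be measurable. On a common probability space, let (X̂^1,Y^1), …, (X̂^n,Y^n) be i.i.d. with law Q on ℝ^d × ℝ, and let (X^{n+1}, M^{n+1}, Y^{n+1}), taking values in ℝ^d × {0,1}^d × ℝ, be independent of them. Fix m ∈ {0,1}^d with P(M^{n+1} = m) > 0; let P*_m denote the conditional law of (mask(X^{n+1}, m), Y^{n+1}) given {M^{n+1} = m} and Q*_m the law of (mask(X̂^1, m), Y^1). Let ω̂_m : X_NA × ℝ → [0,∞) be any measurable function with 0 < ∫ ω̂_m dQ*_m < ∞, set ω̃_m := ω̂_m / ∫ ω̂_m dQ*_m, and let P̃_m be the probability measure with density ω̃_m with respect to Q*_m. For i ≤ n set S^i_m := s(mask(X̂^i, m), Y^i) and ω̃^i := ω̃_m(mask(X̂^i, m), Y^i), and for (x̃, y) define the weights W^i(x̃,y) := ω̃^i / (Σ_{j=1}^n ω̃^j + ω̃_m(x̃,y)) for i ≤ n and W^{n+1}(x̃,y) := ω̃_m(x̃,y) / (Σ_{j=1}^n ω̃^j + ω̃_m(x̃,y)) (with the convention that the weighted quantile below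 is +∞ when the denominator is 0). Define Ĉ^Ŵ(x̃) := { y ∈ ℝ : s(x̃, y) ≤ Quantile_{1−α}( Σ_{i=1}^n W^i(x̃,y) δ_{S^i_m} + W^{n+1}(x̃,y) δ_{+∞} ) }. Then P( Y^{n+1} ∈ Ĉ^Ŵ(mask(X^{n+1}, M^{n+1})) | M^{n+1} = m ) ≥ 1 − α − d_TV(P̃_m, P*_m). -/

import Mathlib

open MeasureTheory ProbabilityTheory
open scoped ENNReal

universe u

/-- Measurable space structure on `Option α`, via the identification with `α ⊕ PUnit`. -/
instance optionMeasurableSpace {α : Type u} [MeasurableSpace α] : MeasurableSpace (Option α) :=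
  MeasurableSpace.comap (Equiv.optionEquivSumPUnit.{0, u} α) inferInstance

/-- The `β`-quantile of the discrete distribution `∑ i, w i · δ_{v i}` on `ℝ ∪ {+∞}`:
`inf { z ∈ ℝ : ∑_{i : v i ≤ z} w i ≥ β }`, with `inf ∅ = +∞`. -/
noncomputable def wQuantile {ι : Type*} [Fintype ι] (β : ℝ) (w : ι → ℝ) (v : ι → EReal) : EReal :=
  sInf {z : EReal | ∃ r : ℝ, z = (r : EReal) ∧
    β ≤ ∑ i ∈ Finset.univ.filter (fun i => v i ≤ (r : EReal)), w i}

/-- Total variation distance between two measures. -/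
noncomputable def tvDist {Z : Type*} [MeasurableSpace Z] (P Q : Measure Z) : ℝ :=
  ⨆ A : {A : Set Z // MeasurableSet A}, |(P A.1).toReal - (Q A.1).toReal|

/-- The mask operator: coordinate `j` is `NA` (i.e. `none`) if `m j = true`, else `x j`. -/
def maskOp {d : ℕ} (x : Fin d → ℝ) (m : Fin d → Bool) : Fin d → Option ℝ :=
  fun j => if m j then none else some (x j)

/-- The `β`-quantile of `(∑_{i=1}^n δ_{sc i} + δ_{+∞})/(n+1)`. -/
noncomputable def splitQuantile {n : ℕ} (β : ℝ) (sc : Fin n → ℝ) : EReal :=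
  wQuantile β (fun _ : Option (Fin n) => 1 / (n + 1 : ℝ))
    (fun i => i.elim (⊤ : EReal) (fun j => ((sc j : ℝ) : EReal)))

section AuxLemmas
variable {ι : Type*} [Fintype ι]
variable {ι : Type*} [Fintype ι]

lemma measurable_some {α : Type u} [MeasurableSpace α] :
    Measurable (fun x : α => (some x : Option α)) := by
  intro t ht
  obtain ⟨u, hu, rfl⟩ := ht
  have : (fun x : α => (some x : Option α)) ⁻¹' ((Equiv.optionEquivSumPUnit.{0,u} α) ⁻¹' u)
      = Sum.inl ⁻¹' u := by
    ext x; simp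
  rw [this]
  exact measurable_inl hu

lemma le_wQuantile_iff {β t : ℝ} {w : ι → ℝ} {v : ι → EReal} :
    (t : EReal) ≤ wQuantile β w v ↔
      ∀ r : ℝ, β ≤ ∑ i ∈ Finset.univ.filter (fun i => v i ≤ (r : EReal)), w i → t ≤ r := by
  unfold wQuantile
  rw [le_sInf_iff]
  constructor
  · intro H r hr
    exact_mod_cast H (r : EReal) ⟨r, rfl, hr⟩
  · rintro H z ⟨r, rfl, hr⟩
    exact_mod_cast H r hr

lemma le_wQuantile_iff_rat {β t : ℝ} {w : ι → ℝ} (hw : ∀ i, 0 ≤ w i) {v : ι → EReal} :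
    (t : EReal) ≤ wQuantile β w v ↔
      ∀ r : ℚ, β ≤ ∑ i ∈ Finset.univ.filter (fun i => v i ≤ ((r : ℝ) : EReal)), w i →
        t ≤ (r : ℝ) := by
  rw [le_wQuantile_iff]
  refine ⟨fun H r hr => H r hr, fun H r hr => ?_⟩
  by_contra hlt
  push_neg at hlt
  obtain ⟨q, hq1, hq2⟩ := exists_rat_btwn hlt
  have hmono : (∑ i ∈ Finset.univ.filter (fun i => v i ≤ (r : EReal)), w i)
      ≤ ∑ i ∈ Finset.univ.filter (fun i => v i ≤ ((q : ℝ) : EReal)), w i := by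
    classical
    refine Finset.sum_le_sum_of_subset_of_nonneg ?_ (fun i _ _ => hw i)
    intro i hi
    simp only [Finset.mem_filter, Finset.mem_univ, true_and] at hi ⊢
    exact le_trans hi (by exact_mod_cast hq1.le)
  exact absurd (H q (hr.trans hmono)) (not_le.2 hq2)

lemma wQuantile_comp_equiv {ι' : Type*} [Fintype ι'] (e : ι' ≃ ι) (β : ℝ)
    (w : ι → ℝ) (v : ι → EReal) :
    wQuantile β (fun i' => w (e i')) (fun i' => v (e i')) = wQuantile β w v := by
  unfold wQuantile
  congr 1
  ext z
  simp only [Set.mem_setOf_eq]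
  constructor <;> rintro ⟨r, rfl, hr⟩ <;> refine ⟨r, rfl, le_of_le_of_eq hr ?_⟩
  · exact Finset.sum_equiv e (by simp) (by simp)
  · exact (Finset.sum_equiv e (by simp) (by simp)).symm

/-- Lemma A: replacing the value at one index by `⊤` vs by `t` itself does not change
whether `t` is below the quantile. -/
lemma le_wQuantile_congr {β t : ℝ} {w : ι → ℝ} {v₁ v₂ : ι → EReal}
    (h : ∀ i r, (r : ℝ) < t → (v₁ i ≤ (r : EReal) ↔ v₂ i ≤ (r : EReal))) :
    ((t : ℝ) : EReal) ≤ wQuantile β w v₁ ↔ (t : EReal) ≤ wQuantile β w v₂ := by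
  rw [le_wQuantile_iff, le_wQuantile_iff]
  have key : ∀ (va vb : ι → EReal),
      (∀ i r, (r : ℝ) < t → (va i ≤ (r : EReal) ↔ vb i ≤ (r : EReal))) →
      (∀ r : ℝ, β ≤ ∑ i ∈ Finset.univ.filter (fun i => va i ≤ (r : EReal)), w i → t ≤ r) →
      ∀ r : ℝ, β ≤ ∑ i ∈ Finset.univ.filter (fun i => vb i ≤ (r : EReal)), w i → t ≤ r := by
    intro va vb hab H r hr
    by_cases hrt : t ≤ r
    · exact hrt
    push_neg at hrt
    have : Finset.univ.filter (fun i => vb i ≤ (r : EReal))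
        = Finset.univ.filter (fun i => va i ≤ (r : EReal)) := by
      refine Finset.filter_congr (fun i _ => ?_)
      exact (hab i r hrt).symm
    exact H r (this ▸ hr)
  exact ⟨key v₁ v₂ h, key v₂ v₁ (fun i r hrt => (h i r hrt).symm)⟩

/-- Lemma B: the mass of points at or below the quantile is at least `β`. -/
lemma wQuantile_mass [Nonempty ι] {β : ℝ} (hβ0 : 0 < β) (hβ1 : β ≤ 1)
    {w : ι → ℝ} (hw : ∀ i, 0 ≤ w i) (hsum : ∑ i, w i = 1) (v : ι → ℝ) :
    β ≤ ∑ i ∈ Finset.univ.filter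
        (fun i => ((v i : ℝ) : EReal) ≤ wQuantile β w (fun i => ((v i : ℝ) : EReal))), w i := by
  classical
  set S : Set EReal := {z : EReal | ∃ r : ℝ, z = (r : EReal) ∧
    β ≤ ∑ i ∈ Finset.univ.filter (fun i => ((v i : ℝ) : EReal) ≤ (r : EReal)), w i} with hS
  have hq : wQuantile β w (fun i => ((v i : ℝ) : EReal)) = sInf S := rfl
  obtain ⟨i₀⟩ := ‹Nonempty ι›
  -- the max is in S
  obtain ⟨M, hM⟩ : ∃ M : ℝ, ∀ i, v i ≤ M := ⟨Finset.univ.sup' ⟨i₀, Finset.mem_univ i₀⟩ v,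
    fun i => Finset.le_sup' v (Finset.mem_univ i)⟩
  have hMS : (M : EReal) ∈ S := by
    refine ⟨M, rfl, ?_⟩
    have : Finset.univ.filter (fun i => ((v i : ℝ) : EReal) ≤ (M : EReal)) = Finset.univ := by
      refine Finset.filter_true_of_mem (fun i _ => ?_)
      exact_mod_cast hM i
    rw [this, hsum]
    exact hβ1
  -- lower bound for S
  obtain ⟨L, hL⟩ : ∃ L : ℝ, ∀ i, L ≤ v i := ⟨Finset.univ.inf' ⟨i₀, Finset.mem_univ i₀⟩ v,
    fun i => Finset.inf'_le v (Finset.mem_univ i)⟩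
  have hlower : ∀ z ∈ S, (L : EReal) ≤ z := by
    rintro z ⟨r, rfl, hr⟩
    have hne : (Finset.univ.filter (fun i => ((v i : ℝ) : EReal) ≤ (r : EReal))).Nonempty := by
      by_contra hemp
      rw [Finset.not_nonempty_iff_eq_empty] at hemp
      rw [hemp, Finset.sum_empty] at hr
      linarith
    obtain ⟨i, hi⟩ := hne
    simp only [Finset.mem_filter] at hi
    have : (L : ℝ) ≤ r := le_trans (hL i) (by exact_mod_cast hi.2)
    exact_mod_cast this
  have hbot : (L : EReal) ≤ sInf S := le_sInf hlower
  have htop : sInf S ≤ (M : EReal) := sInf_le hMS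
  -- extract the real value of the quantile
  have hqne_top : sInf S ≠ ⊤ := fun h => by
    rw [h] at htop; exact absurd htop (by simp)
  have hqne_bot : sInf S ≠ ⊥ := fun h => by
    rw [h] at hbot; exact absurd hbot (by simp)
  obtain ⟨qr, hqr⟩ : ∃ qr : ℝ, sInf S = (qr : EReal) :=
    ⟨(sInf S).toReal, (EReal.coe_toReal hqne_top hqne_bot).symm⟩
  rw [hq, hqr]
  -- main claim : β ≤ F qr
  by_cases hT : (Finset.univ.filter (fun i => qr < v i)).Nonempty
  · set t₀ : ℝ := (Finset.univ.filter (fun i => qr < v i)).inf' hT v with ht₀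
    have hqt₀ : qr < t₀ := by
      rw [ht₀, Finset.lt_inf'_iff]
      intro i hi
      exact (Finset.mem_filter.1 hi).2
    have : sInf S < (t₀ : EReal) := by rw [hqr]; exact_mod_cast hqt₀
    obtain ⟨z, hzS, hz⟩ := sInf_lt_iff.1 this
    obtain ⟨r, rfl, hr⟩ := hzS
    have hrt₀ : r < t₀ := by exact_mod_cast hz
    refine le_trans hr (Finset.sum_le_sum_of_subset_of_nonneg ?_ (fun i _ _ => hw i))
    intro i hi
    simp only [Finset.mem_filter, Finset.mem_univ, true_and] at hi ⊢
    have hvir : v i ≤ r := by exact_mod_cast hi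
    by_contra hcon
    push_neg at hcon
    have : (qr : EReal) < (v i : EReal) := by exact_mod_cast hcon
    have hvi : qr < v i := by exact_mod_cast this
    have : t₀ ≤ v i := Finset.inf'_le v (Finset.mem_filter.2 ⟨Finset.mem_univ i, hvi⟩)
    linarith
  · -- all v i ≤ qr
    rw [Finset.not_nonempty_iff_eq_empty, Finset.filter_eq_empty_iff] at hT
    have : Finset.univ.filter (fun i => ((v i : ℝ) : EReal) ≤ (qr : EReal)) = Finset.univ := by
      refine Finset.filter_true_of_mem (fun i _ => ?_)
      have : v i ≤ qr := not_lt.1 (hT (Finset.mem_univ i))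
      exact_mod_cast this
    rw [this, hsum]; exact hβ1

lemma measurableSet_le_wQuantile {γ : Type*} [MeasurableSpace γ] {β : ℝ}
    {W : γ → ι → ℝ} (hW : ∀ i, Measurable (fun x => W x i)) (hWnn : ∀ x i, 0 ≤ W x i)
    {v : γ → ι → EReal} (hv : ∀ i, Measurable (fun x => v x i))
    {t : γ → ℝ} (ht : Measurable t) :
    MeasurableSet {x | (t x : EReal) ≤ wQuantile β (W x) (v x)} := by
  classical
  have hset : {x | (t x : EReal) ≤ wQuantile β (W x) (v x)} =
      ⋂ r : ℚ, ({x | β ≤ ∑ i, if v x i ≤ ((r : ℝ) : EReal) then W x i else 0}ᶜ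
        ∪ {x | t x ≤ (r : ℝ)}) := by
    ext x
    simp only [Set.mem_setOf_eq, Set.mem_iInter, Set.mem_union, Set.mem_compl_iff,
      Set.mem_setOf_eq]
    rw [le_wQuantile_iff_rat (hWnn x)]
    refine forall_congr' (fun r => ?_)
    rw [Finset.sum_filter, imp_iff_not_or]
  rw [hset]
  refine MeasurableSet.iInter (fun r => MeasurableSet.union (MeasurableSet.compl ?_)
    (measurableSet_le ht measurable_const))
  have hsum : Measurable (fun x => ∑ i, if v x i ≤ ((r : ℝ) : EReal) then W x i else 0) := by
    refine Finset.measurable_sum _ (fun i _ => ?_)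
    exact Measurable.ite (measurableSet_le (hv i) measurable_const) (hW i) measurable_const
  exact measurableSet_le measurable_const hsum

lemma bad_mass [Nonempty ι] {β : ℝ} (hβ0 : 0 < β) (hβ1 : β ≤ 1)
    {w : ι → ℝ} (hw : ∀ i, 0 ≤ w i) (v : ι → ℝ) :
    ∑ i ∈ Finset.univ.filter (fun i => ¬ (((v i : ℝ) : EReal) ≤
        wQuantile β (fun i => w i / ∑ j, w j) (fun i => ((v i : ℝ) : EReal)))), w i
      ≤ (1 - β) * ∑ j, w j := by
  classical
  by_cases hD : ∑ j, w j = 0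
  · have hz : ∀ i, w i = 0 := by
      intro i
      have := (Finset.sum_eq_zero_iff_of_nonneg (fun i _ => hw i)).1 hD
      exact this i (Finset.mem_univ i)
    rw [Finset.sum_eq_zero (fun i _ => hz i), hD]
    simp
  · have hDpos : 0 < ∑ j, w j := lt_of_le_of_ne (Finset.sum_nonneg (fun i _ => hw i))
      (Ne.symm hD)
    set D := ∑ j, w j with hDdef
    have hsum1 : ∑ i, w i / D = 1 := by
      rw [← Finset.sum_div, ← hDdef, div_self hD]
    have hmass := wQuantile_mass (w := fun i => w i / D) hβ0 hβ1
      (fun i => div_nonneg (hw i) hDpos.le) hsum1 v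
    set q := wQuantile β (fun i => w i / D) (fun i => ((v i : ℝ) : EReal)) with hqdef
    have hsplit := Finset.sum_filter_add_sum_filter_not Finset.univ
      (fun i => ((v i : ℝ) : EReal) ≤ q) w
    have hgood : β * D ≤ ∑ i ∈ Finset.univ.filter (fun i => ((v i : ℝ) : EReal) ≤ q), w i := by
      have := mul_le_mul_of_nonneg_right hmass hDpos.le
      calc β * D ≤ (∑ i ∈ Finset.univ.filter (fun i => ((v i : ℝ) : EReal) ≤ q),
            w i / D) * D := this
        _ = ∑ i ∈ Finset.univ.filter (fun i => ((v i : ℝ) : EReal) ≤ q), w i := by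
            rw [Finset.sum_mul]
            refine Finset.sum_congr rfl (fun i _ => ?_)
            field_simp
    have hDsum : ∑ i, w i = D := rfl
    nlinarith [hsplit, hgood]

end AuxLemmas

section CoreSection

variable {Z : Type*} [MeasurableSpace Z]

/-- coordinate-apply description of piCongrLeft for constant families -/
lemma piCongrLeft_const_apply {ι ι' : Type*} (e : ι' ≃ ι) (g : ι' → Z) :
    (MeasurableEquiv.piCongrLeft (fun _ => Z) e) g = g ∘ e.symm := by
  funext a
  have h2 : (Equiv.piCongrLeft (fun _ => Z) e) g (e (e.symm a)) = g (e.symm a) :=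
    Equiv.piCongrLeft_apply_apply (fun _ => Z) e g (e.symm a)
  rw [e.apply_symm_apply] at h2
  simpa [MeasurableEquiv.coe_piCongrLeft] using h2

/-- marginal of a pi measure of probability measures -/
lemma lintegral_pi_eval {n : ℕ} (Qs : Measure Z) [IsProbabilityMeasure Qs]
    (k : Fin (n + 1)) (h : Z → ℝ≥0∞) (hh : Measurable h) :
    ∫⁻ f, h (f k) ∂(Measure.pi fun _ : Fin (n + 1) => Qs) = ∫⁻ z, h z ∂Qs := by
  have hmp := measurePreserving_piFinSuccAbove (fun _ : Fin (n + 1) => Qs) k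
  have h1 : ∫⁻ f, h (f k) ∂(Measure.pi fun _ : Fin (n + 1) => Qs)
      = ∫⁻ p, h p.1 ∂(Qs.prod (Measure.pi fun _ : Fin n => Qs)) := by
    rw [← hmp.lintegral_comp (f := fun p : Z × (Fin n → Z) => h p.1) (hh.comp measurable_fst)]
    refine lintegral_congr (fun f => ?_)
    congr 1
  rw [h1, ← lintegral_map hh measurable_fst, Measure.map_fst_prod]
  simp

set_option maxHeartbeats 2000000 in
theorem core_coverage {n : ℕ} (Qs : Measure Z) [IsProbabilityMeasure Qs]
    (s wm : Z → ℝ) (hs : Measurable s) (hwm : Measurable wm) (hw0 : ∀ z, 0 ≤ wm z)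
    (c : ℝ) (hcpos : 0 < c)
    (hint : ∫⁻ z, ENNReal.ofReal (wm z / c) ∂Qs = 1)
    (α : ℝ) (hα : α ∈ Set.Ioo (0 : ℝ) 1) :
    ENNReal.ofReal (1 - α) ≤
      ∫⁻ f, ({f : Fin (n + 1) → Z | ((s (f (Fin.last n)) : ℝ) : EReal) ≤
          wQuantile (1 - α) (fun i => (wm (f i) / c) / ∑ j, (wm (f j) / c))
            (fun i => ((s (f i) : ℝ) : EReal))}).indicator
          (fun f => ENNReal.ofReal (wm (f (Fin.last n)) / c)) f
        ∂(Measure.pi fun _ : Fin (n + 1) => Qs) := by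
  classical
  set ρ : Measure (Fin (n + 1) → Z) := Measure.pi fun _ : Fin (n + 1) => Qs with hρ
  set ww : (Fin (n + 1) → Z) → Fin (n + 1) → ℝ := fun f i => wm (f i) / c with hww
  set q : (Fin (n + 1) → Z) → EReal := fun f =>
    wQuantile (1 - α) (fun i => ww f i / ∑ j, ww f j) (fun i => ((s (f i) : ℝ) : EReal))
    with hq
  set good : Fin (n + 1) → Set (Fin (n + 1) → Z) := fun k =>
    {f | ((s (f k) : ℝ) : EReal) ≤ q f} with hgood
  have hwwmeas : ∀ i, Measurable fun f : Fin (n + 1) → Z => ww f i := fun i =>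
    (hwm.comp (measurable_pi_apply i)).div_const c
  have hwwnn : ∀ f i, 0 ≤ ww f i := fun f i => div_nonneg (hw0 _) hcpos.le
  have hWmeas : ∀ i, Measurable fun f : Fin (n + 1) → Z => ww f i / ∑ j, ww f j := by
    intro i
    exact (hwwmeas i).div (Finset.measurable_sum _ fun j _ => hwwmeas j)
  have hWnn : ∀ (f : Fin (n + 1) → Z) i, 0 ≤ ww f i / ∑ j, ww f j := fun f i =>
    div_nonneg (hwwnn f i) (Finset.sum_nonneg fun j _ => hwwnn f j)
  have hvmeas : ∀ i, Measurable fun f : Fin (n + 1) → Z => ((s (f i) : ℝ) : EReal) :=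
    fun i => measurable_coe_real_ereal.comp (hs.comp (measurable_pi_apply i))
  have hgoodmeas : ∀ k, MeasurableSet (good k) := fun k =>
    measurableSet_le_wQuantile hWmeas hWnn hvmeas (hs.comp (measurable_pi_apply k))
  -- the integrands
  set Fb : Fin (n + 1) → (Fin (n + 1) → Z) → ℝ≥0∞ := fun k =>
    (good k)ᶜ.indicator (fun f => ENNReal.ofReal (ww f k)) with hFb
  have hFbmeas : ∀ k, Measurable (Fb k) := fun k =>
    (Measurable.ennreal_ofReal (hwwmeas k)).indicator (hgoodmeas k).compl
  -- symmetry: each bad integral equals the last one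
  have hswap : ∀ k : Fin (n + 1), ∫⁻ f, Fb (Fin.last n) f ∂ρ = ∫⁻ f, Fb k f ∂ρ := by
    intro k
    set e : Fin (n + 1) ≃ Fin (n + 1) := Equiv.swap k (Fin.last n) with he
    have hmp : MeasurePreserving (MeasurableEquiv.piCongrLeft (fun _ => Z) e) ρ ρ :=
      measurePreserving_piCongrLeft (fun _ : Fin (n + 1) => Qs) e
    rw [MeasurePreserving.lintegral_map_equiv (Fb (Fin.last n))
      (MeasurableEquiv.piCongrLeft (fun _ => Z) e) hmp]
    refine lintegral_congr (fun f => ?_)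
    have happ : (MeasurableEquiv.piCongrLeft (fun _ => Z) e) f = f ∘ e := by
      rw [piCongrLeft_const_apply]
      rw [Equiv.symm_swap]
    rw [happ]
    -- now : Fb last (f ∘ e) = Fb k f
    have hqcomp : q (f ∘ e) = q f := by
      rw [hq]
      have hsum : ∑ j, ww (f ∘ e) j = ∑ j, ww f j := by
        simp only [hww]
        exact Equiv.sum_comp e (fun j => wm (f j) / c)
      simp only [hsum]
      have : (fun i => ww (f ∘ e) i / ∑ j, ww f j) = fun i => ww f (e i) / ∑ j, ww f j := rfl
      rw [this]
      exact wQuantile_comp_equiv e (1 - α) (fun i => ww f i / ∑ j, ww f j)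
        (fun i => ((s (f i) : ℝ) : EReal))
    have hmem : (f ∘ e) ∈ good (Fin.last n) ↔ f ∈ good k := by
      simp only [hgood, Set.mem_setOf_eq, hqcomp, Function.comp_apply]
      rw [show e (Fin.last n) = k from Equiv.swap_apply_right k (Fin.last n)]
    by_cases hf : f ∈ good k
    · have h1 : (f ∘ e) ∉ (good (Fin.last n))ᶜ := not_not_intro (hmem.2 hf)
      have h2 : f ∉ (good k)ᶜ := not_not_intro hf
      simp only [hFb]
      rw [Set.indicator_of_notMem h1, Set.indicator_of_notMem h2]
    · have h1 : (f ∘ e) ∈ (good (Fin.last n))ᶜ := fun hc => hf (hmem.1 hc)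
      have h2 : f ∈ (good k)ᶜ := hf
      simp only [hFb]
      rw [Set.indicator_of_mem h1, Set.indicator_of_mem h2]
      congr 1
      show wm (f (e (Fin.last n))) / c = wm (f k) / c
      rw [show e (Fin.last n) = k from Equiv.swap_apply_right k (Fin.last n)]
  -- pointwise bad mass bound
  have hptwise : ∀ f : Fin (n + 1) → Z, ∑ k, Fb k f ≤ ENNReal.ofReal (α * ∑ j, ww f j) := by
    intro f
    have hsum : ∑ k, Fb k f = ENNReal.ofReal
        (∑ k ∈ Finset.univ.filter (fun k => ¬ (((s (f k) : ℝ) : EReal) ≤ q f)), ww f k) := by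
      rw [ENNReal.ofReal_sum_of_nonneg (fun k _ => hwwnn f k)]
      rw [Finset.sum_filter]
      refine Finset.sum_congr rfl (fun k _ => ?_)
      by_cases hk : ((s (f k) : ℝ) : EReal) ≤ q f
      · have h2 : f ∉ (good k)ᶜ := not_not_intro hk
        simp only [hFb]
        rw [Set.indicator_of_notMem h2, if_neg (not_not_intro hk)]
      · have h2 : f ∈ (good k)ᶜ := hk
        simp only [hFb]
        rw [Set.indicator_of_mem h2, if_pos hk]
    rw [hsum]
    refine ENNReal.ofReal_le_ofReal ?_
    have := bad_mass (β := 1 - α) (w := fun i => ww f i)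
      (by linarith [hα.2]) (by linarith [hα.1]) (fun i => hwwnn f i) (fun i => s (f i))
    simpa using this
  -- integral of total weight
  have hwwint : ∀ k : Fin (n + 1), ∫⁻ f, ENNReal.ofReal (ww f k) ∂ρ = 1 := by
    intro k
    rw [hρ]
    rw [lintegral_pi_eval Qs k (fun z => ENNReal.ofReal (wm z / c))
      (Measurable.ennreal_ofReal (hwm.div_const c))]
    exact hint
  have hDint : ∫⁻ f, ENNReal.ofReal (α * ∑ j, ww f j) ∂ρ = ENNReal.ofReal α * (n + 1) := by
    have : ∀ f : Fin (n + 1) → Z, ENNReal.ofReal (α * ∑ j, ww f j)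
        = ENNReal.ofReal α * ∑ j, ENNReal.ofReal (ww f j) := by
      intro f
      rw [ENNReal.ofReal_mul hα.1.le, ENNReal.ofReal_sum_of_nonneg (fun j _ => hwwnn f j)]
    simp_rw [this]
    rw [lintegral_const_mul _ (Finset.measurable_sum _ fun j _ =>
      Measurable.ennreal_ofReal (hwwmeas j))]
    rw [lintegral_finset_sum _ (fun j _ => Measurable.ennreal_ofReal (hwwmeas j))]
    simp_rw [hwwint]
    simp [mul_comm]
  -- the bad integral is at most ofReal α
  have hbadle : ∫⁻ f, Fb (Fin.last n) f ∂ρ ≤ ENNReal.ofReal α := by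
    have hsum : (n + 1 : ℝ≥0∞) * ∫⁻ f, Fb (Fin.last n) f ∂ρ ≤ ENNReal.ofReal α * (n + 1) := by
      have h1 : (n + 1 : ℝ≥0∞) * ∫⁻ f, Fb (Fin.last n) f ∂ρ = ∑ k : Fin (n + 1),
          ∫⁻ f, Fb k f ∂ρ := by
        rw [Finset.sum_congr rfl (fun k _ => (hswap k).symm)]
        simp [Finset.sum_const, mul_comm]
      rw [h1, ← lintegral_finset_sum _ (fun k _ => hFbmeas k)]
      exact le_trans (lintegral_mono hptwise) (le_of_eq hDint)
    have hne : (n + 1 : ℝ≥0∞) ≠ 0 := by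
      simp
    have hnetop : (n + 1 : ℝ≥0∞) ≠ ⊤ := by
      simp [ENNReal.add_ne_top]
    rw [mul_comm (ENNReal.ofReal α) _] at hsum
    exact (ENNReal.mul_le_mul_iff_right hne hnetop).1 hsum
  -- good + bad = 1
  have hgoodbad : (∫⁻ f, (good (Fin.last n)).indicator
        (fun f => ENNReal.ofReal (ww f (Fin.last n))) f ∂ρ) + ∫⁻ f, Fb (Fin.last n) f ∂ρ
      = 1 := by
    simp only [hFb]
    rw [lintegral_indicator (hgoodmeas (Fin.last n)),
      lintegral_indicator (hgoodmeas (Fin.last n)).compl]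
    rw [lintegral_add_compl _ (hgoodmeas (Fin.last n))]
    exact hwwint (Fin.last n)
  -- conclude
  have hbadfin : ∫⁻ f, Fb (Fin.last n) f ∂ρ ≠ ⊤ :=
    ne_top_of_le_ne_top ENNReal.ofReal_ne_top hbadle
  have hgoodeq : ∫⁻ f, (good (Fin.last n)).indicator
      (fun f => ENNReal.ofReal (ww f (Fin.last n))) f ∂ρ = 1 - ∫⁻ f, Fb (Fin.last n) f ∂ρ :=
    ENNReal.eq_sub_of_add_eq hbadfin hgoodbad
  have hfinal : ENNReal.ofReal (1 - α) ≤ 1 - ∫⁻ f, Fb (Fin.last n) f ∂ρ := by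
    have h1 : ENNReal.ofReal (1 - α) = 1 - ENNReal.ofReal α := by
      rw [ENNReal.ofReal_sub _ hα.1.le, ENNReal.ofReal_one]
    rw [h1]
    exact tsub_le_tsub_left hbadle 1
  rw [← hρ] at *
  exact le_trans hfinal (le_of_eq hgoodeq.symm)

end CoreSection

set_option maxHeartbeats 4000000 in
/-- Weighted split conformal prediction with an estimated likelihood ratio:
with `Q*_m` the law of `(mask(X̂^1,m), Y^1)`, `P*_m` the conditional law of
`(mask(X^{n+1},m), Y^{n+1})` given `{M^{n+1}=m}`, `ω̂_m` any measurable nonnegative function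
with `0 < ∫ ω̂_m dQ*_m < ∞`, `ω̃_m := ω̂_m / ∫ ω̂_m dQ*_m`, `P̃_m := ω̃_m · Q*_m`, the weighted
conformal set built from `ω̃_m` covers with conditional probability
`≥ 1 - α - d_TV(P̃_m, P*_m)` given `{M^{n+1}=m}`. -/
theorem weighted_conformal_estimated_ratio_coverage
    (d n : ℕ) (hd : 1 ≤ d) (hn : 1 ≤ n) (α : ℝ) (hα : α ∈ Set.Ioo (0 : ℝ) 1)
    (s : (Fin d → Option ℝ) × ℝ → ℝ) (hs : Measurable s)
    (Q : Measure ((Fin d → ℝ) × ℝ)) [IsProbabilityMeasure Q]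
    {Ω : Type*} [MeasurableSpace Ω] (μ : Measure Ω) [IsProbabilityMeasure μ]
    (XY : Fin n → Ω → (Fin d → ℝ) × ℝ) (hXYmeas : ∀ i, Measurable (XY i))
    (hXYiid : iIndepFun XY μ)
    (hXYlaw : ∀ i, Measure.map (XY i) μ = Q)
    (Xt : Ω → Fin d → ℝ) (Mt : Ω → Fin d → Bool) (Yt : Ω → ℝ)
    (hXt : Measurable Xt) (hMt : Measurable Mt) (hYt : Measurable Yt)
    (hindep : IndepFun (fun x => fun i => XY i x) (fun x => (Xt x, Mt x, Yt x)) μ)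
    (m : Fin d → Bool) (hm : μ {x | Mt x = m} ≠ 0)
    (Qstar : Measure ((Fin d → Option ℝ) × ℝ))
    (hQstar : Qstar = Measure.map (fun p => (maskOp p.1 m, p.2)) Q)
    (Pstar : Measure ((Fin d → Option ℝ) × ℝ))
    (hPstar : Pstar = Measure.map (fun x => (maskOp (Xt x) m, Yt x)) (μ[|{x | Mt x = m}]))
    (wm : (Fin d → Option ℝ) × ℝ → ℝ) (hwmeas : Measurable wm) (hw0 : ∀ z, 0 ≤ wm z)
    (hwint : Integrable wm Qstar) (c : ℝ) (hc : c = ∫ z, wm z ∂Qstar) (hcpos : 0 < c) :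
    1 - α - tvDist (Qstar.withDensity (fun z => ENNReal.ofReal (wm z / c))) Pstar ≤
      ((μ[|{x | Mt x = m}]) {x | ((s (maskOp (Xt x) (Mt x), Yt x) : ℝ) : EReal) ≤
        wQuantile (1 - α)
          (fun i : Option (Fin n) =>
            i.elim
              ((wm (maskOp (Xt x) (Mt x), Yt x) / c) /
                ((∑ j : Fin n, wm (maskOp (XY j x).1 m, (XY j x).2) / c) +
                  wm (maskOp (Xt x) (Mt x), Yt x) / c))
              (fun j => (wm (maskOp (XY j x).1 m, (XY j x).2) / c) /
                ((∑ j' : Fin n, wm (maskOp (XY j' x).1 m, (XY j' x).2) / c) +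
                  wm (maskOp (Xt x) (Mt x), Yt x) / c)))
          (fun i : Option (Fin n) =>
            i.elim (⊤ : EReal)
              (fun j => ((s (maskOp (XY j x).1 m, (XY j x).2) : ℝ) : EReal)))}).toReal := by
  classical
  -- notation
  set B : Set Ω := {x | Mt x = m} with hB
  have hBmeas : MeasurableSet B := hMt (measurableSet_singleton m)
  set μ' : Measure Ω := μ[|B] with hμ'
  haveI hμ'prob : IsProbabilityMeasure μ' := cond_isProbabilityMeasure hm
  -- the mask map
  have hmaskOp : Measurable (fun y : Fin d → ℝ => maskOp y m) := by
    refine measurable_pi_lambda _ (fun j => ?_)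
    by_cases hj : m j
    · simp only [maskOp, hj, if_true]
      exact measurable_const
    · simp only [maskOp, hj, if_false]
      exact measurable_some.comp (measurable_pi_apply j)
  set mk : (Fin d → ℝ) × ℝ → (Fin d → Option ℝ) × ℝ := fun p => (maskOp p.1 m, p.2) with hmkdef
  have hmk : Measurable mk := (hmaskOp.comp measurable_fst).prod measurable_snd
  -- basic random variables
  set calib : Ω → Fin n → (Fin d → ℝ) × ℝ := fun x i => XY i x with hcalibdef
  have hcalib : Measurable calib := measurable_pi_lambda _ hXYmeas
  set mcal : Ω → Fin n → (Fin d → Option ℝ) × ℝ := fun x i => mk (XY i x) with hmcaldef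
  have hmcal : Measurable mcal := measurable_pi_lambda _ (fun i => hmk.comp (hXYmeas i))
  set test : Ω → (Fin d → Option ℝ) × ℝ := fun x => (maskOp (Xt x) m, Yt x) with htestdef
  have htest : Measurable test := (hmaskOp.comp hXt).prod hYt
  -- laws
  have hQstarprob : IsProbabilityMeasure Qstar := by
    rw [hQstar]; exact Measure.isProbabilityMeasure_map hmk.aemeasurable
  have hPstarprob : IsProbabilityMeasure Pstar := by
    rw [hPstar]; exact Measure.isProbabilityMeasure_map htest.aemeasurable
  have hcalib_law : Measure.map calib μ = Measure.pi (fun _ : Fin n => Q) := by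
    symm
    refine Measure.pi_eq (fun t ht => ?_)
    rw [Measure.map_apply hcalib (MeasurableSet.univ_pi ht)]
    have hpre : calib ⁻¹' (Set.univ.pi t) = ⋂ i, XY i ⁻¹' t i := by
      ext x; simp [hcalibdef, Set.mem_pi]
    rw [hpre]
    rw [hXYiid.meas_iInter (fun i => ⟨t i, ht i, rfl⟩)]
    exact Finset.prod_congr rfl (fun i _ => by
      rw [← hXYlaw i, Measure.map_apply (hXYmeas i) (ht i)])
  have hpostmeas : Measurable (fun (v : Fin n → (Fin d → ℝ) × ℝ) (i : Fin n) => mk (v i)) :=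
    measurable_pi_lambda _ (fun i => hmk.comp (measurable_pi_apply i))
  have hmcal_law : Measure.map mcal μ = Measure.pi (fun _ : Fin n => Qstar) := by
    have hcomp : mcal = (fun (v : Fin n → (Fin d → ℝ) × ℝ) (i : Fin n) => mk (v i)) ∘ calib :=
      rfl
    rw [hcomp, ← Measure.map_map hpostmeas hcalib, hcalib_law]
    symm
    refine Measure.pi_eq (fun t ht => ?_)
    rw [Measure.map_apply hpostmeas (MeasurableSet.univ_pi ht)]
    have hpre : (fun (v : Fin n → (Fin d → ℝ) × ℝ) (i : Fin n) => mk (v i)) ⁻¹'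
        (Set.univ.pi t) = Set.univ.pi (fun i => mk ⁻¹' t i) := by
      ext v; simp [Set.mem_pi]
    rw [hpre, Measure.pi_pi]
    exact Finset.prod_congr rfl (fun i _ => by rw [hQstar, Measure.map_apply hmk (ht i)])
  -- joint law of (mcal, test) under μ'
  set Φ : Ω → (Fin n → (Fin d → Option ℝ) × ℝ) × ((Fin d → Option ℝ) × ℝ) :=
    fun x => (mcal x, test x) with hΦdef
  have hΦ : Measurable Φ := hmcal.prod htest
  have hΦlaw : Measure.map Φ μ' = (Measure.pi (fun _ : Fin n => Qstar)).prod Pstar := by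
    symm
    refine Measure.prod_eq (fun A₁ A₂ h1 h2 => ?_)
    rw [Measure.map_apply hΦ (h1.prod h2)]
    have hpre : Φ ⁻¹' (A₁ ×ˢ A₂) = mcal ⁻¹' A₁ ∩ test ⁻¹' A₂ := rfl
    rw [hpre, hμ', cond_apply hBmeas]
    set trip : Ω → (Fin d → ℝ) × (Fin d → Bool) × ℝ := fun x => (Xt x, Mt x, Yt x) with htripdef
    have htrip : Measurable trip := hXt.prodMk (hMt.prodMk hYt)
    set C : Set ((Fin d → ℝ) × (Fin d → Bool) × ℝ) :=
      {p | (maskOp p.1 m, p.2.2) ∈ A₂ ∧ p.2.1 = m} with hCdef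
    have hCmeas : MeasurableSet C := by
      refine MeasurableSet.inter ?_ ?_
      · exact ((hmaskOp.comp measurable_fst).prodMk
          (measurable_snd.comp measurable_snd)) h2
      · exact (measurable_fst.comp measurable_snd) (measurableSet_singleton m)
    have hsets : B ∩ (mcal ⁻¹' A₁ ∩ test ⁻¹' A₂)
        = calib ⁻¹' ((fun (v : Fin n → (Fin d → ℝ) × ℝ) (i : Fin n) => mk (v i)) ⁻¹' A₁)
          ∩ trip ⁻¹' C := by
      ext x
      simp only [Set.mem_inter_iff, Set.mem_preimage, Set.mem_setOf_eq, hB, hCdef, htripdef,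
        hmcaldef, htestdef, hcalibdef]
      tauto
    rw [hsets]
    have hmul := (indepFun_iff_measure_inter_preimage_eq_mul.1 hindep)
      ((fun (v : Fin n → (Fin d → ℝ) × ℝ) (i : Fin n) => mk (v i)) ⁻¹' A₁) C
      (hpostmeas h1) hCmeas
    have hmul' : μ (calib ⁻¹' ((fun (v : Fin n → (Fin d → ℝ) × ℝ) (i : Fin n) =>
          mk (v i)) ⁻¹' A₁) ∩ trip ⁻¹' C)
        = μ (calib ⁻¹' ((fun (v : Fin n → (Fin d → ℝ) × ℝ) (i : Fin n) =>
            mk (v i)) ⁻¹' A₁)) * μ (trip ⁻¹' C) := hmul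
    rw [hmul']
    have hfst : μ (calib ⁻¹' ((fun (v : Fin n → (Fin d → ℝ) × ℝ) (i : Fin n) =>
        mk (v i)) ⁻¹' A₁)) = (Measure.pi (fun _ : Fin n => Qstar)) A₁ := by
      rw [← hmcal_law, Measure.map_apply hmcal h1]
      rfl
    have hsnd : (μ B)⁻¹ * μ (trip ⁻¹' C) = Pstar A₂ := by
      rw [hPstar, Measure.map_apply htest h2, cond_apply hBmeas]
      have hseteq : trip ⁻¹' C = B ∩ test ⁻¹' A₂ := by
        ext x
        simp only [Set.mem_inter_iff, Set.mem_preimage, Set.mem_setOf_eq, hB, hCdef, htripdef,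
          htestdef]
        tauto
      rw [hseteq]
    rw [hfst]
    rw [mul_left_comm]
    rw [hsnd]
  -- the coverage event in the product space
  set Dp : (Fin n → (Fin d → Option ℝ) × ℝ) × ((Fin d → Option ℝ) × ℝ) → ℝ :=
    fun p => (∑ j, wm (p.1 j) / c) + wm p.2 / c with hDpdef
  set covW : (Fin n → (Fin d → Option ℝ) × ℝ) × ((Fin d → Option ℝ) × ℝ) →
      Option (Fin n) → ℝ := fun p i =>
    i.elim ((wm p.2 / c) / Dp p) (fun j => (wm (p.1 j) / c) / Dp p) with hcovWdef
  set covV : (Fin n → (Fin d → Option ℝ) × ℝ) × ((Fin d → Option ℝ) × ℝ) →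
      Option (Fin n) → EReal := fun p i =>
    i.elim (⊤ : EReal) (fun j => ((s (p.1 j) : ℝ) : EReal)) with hcovVdef
  set A : Set ((Fin n → (Fin d → Option ℝ) × ℝ) × ((Fin d → Option ℝ) × ℝ)) :=
    {p | ((s p.2 : ℝ) : EReal) ≤ wQuantile (1 - α) (covW p) (covV p)} with hAdef
  have hDpmeas : Measurable Dp := by
    refine Measurable.add ?_ ((hwmeas.comp measurable_snd).div_const c)
    exact Finset.measurable_sum _ (fun j _ =>
      ((hwmeas.comp ((measurable_pi_apply j).comp measurable_fst)).div_const c))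
  have hAmeas : MeasurableSet A := by
    refine measurableSet_le_wQuantile (W := covW) (v := covV) ?_ ?_ ?_ (hs.comp measurable_snd)
    · rintro (_ | j)
      · exact ((hwmeas.comp measurable_snd).div_const c).div hDpmeas
      · exact ((hwmeas.comp ((measurable_pi_apply j).comp measurable_fst)).div_const c).div
          hDpmeas
    · rintro p (_ | j)
      · refine div_nonneg (div_nonneg (hw0 _) hcpos.le) ?_
        refine add_nonneg (Finset.sum_nonneg (fun j _ => div_nonneg (hw0 _) hcpos.le))
          (div_nonneg (hw0 _) hcpos.le)
      · refine div_nonneg (div_nonneg (hw0 _) hcpos.le) ?_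
        refine add_nonneg (Finset.sum_nonneg (fun j _ => div_nonneg (hw0 _) hcpos.le))
          (div_nonneg (hw0 _) hcpos.le)
    · rintro (_ | j)
      · exact measurable_const
      · exact measurable_coe_real_ereal.comp
          (hs.comp ((measurable_pi_apply j).comp measurable_fst))
  -- replace `Mt x` by `m` in the event, a.e.
  have haem : ∀ᵐ x ∂μ', Mt x = m := by
    rw [ae_iff]
    have : {x | ¬Mt x = m} = Bᶜ := rfl
    rw [this, hμ', cond_apply hBmeas]
    simp [Set.inter_compl_self]
  have hevent : μ' {x | ((s (maskOp (Xt x) (Mt x), Yt x) : ℝ) : EReal) ≤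
        wQuantile (1 - α)
          (fun i : Option (Fin n) =>
            i.elim
              ((wm (maskOp (Xt x) (Mt x), Yt x) / c) /
                ((∑ j : Fin n, wm (maskOp (XY j x).1 m, (XY j x).2) / c) +
                  wm (maskOp (Xt x) (Mt x), Yt x) / c))
              (fun j => (wm (maskOp (XY j x).1 m, (XY j x).2) / c) /
                ((∑ j' : Fin n, wm (maskOp (XY j' x).1 m, (XY j' x).2) / c) +
                  wm (maskOp (Xt x) (Mt x), Yt x) / c)))
          (fun i : Option (Fin n) =>
            i.elim (⊤ : EReal)
              (fun j => ((s (maskOp (XY j x).1 m, (XY j x).2) : ℝ) : EReal)))}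
      = ((Measure.pi (fun _ : Fin n => Qstar)).prod Pstar) A := by
    have hstep1 : μ' {x | ((s (maskOp (Xt x) (Mt x), Yt x) : ℝ) : EReal) ≤
        wQuantile (1 - α)
          (fun i : Option (Fin n) =>
            i.elim
              ((wm (maskOp (Xt x) (Mt x), Yt x) / c) /
                ((∑ j : Fin n, wm (maskOp (XY j x).1 m, (XY j x).2) / c) +
                  wm (maskOp (Xt x) (Mt x), Yt x) / c))
              (fun j => (wm (maskOp (XY j x).1 m, (XY j x).2) / c) /
                ((∑ j' : Fin n, wm (maskOp (XY j' x).1 m, (XY j' x).2) / c) +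
                  wm (maskOp (Xt x) (Mt x), Yt x) / c)))
          (fun i : Option (Fin n) =>
            i.elim (⊤ : EReal)
              (fun j => ((s (maskOp (XY j x).1 m, (XY j x).2) : ℝ) : EReal)))}
        = μ' (Φ ⁻¹' A) := by
      refine measure_congr (Filter.eventuallyEq_set.2 (haem.mono (fun x hx => ?_)))
      simp only [Set.mem_setOf_eq, Set.mem_preimage, hx]
      exact Iff.rfl
    rw [hstep1, ← Measure.map_apply hΦ hAmeas, hΦlaw]
  rw [hevent]
  -- abbreviations for the analytic part
  set π₀ : Measure (Fin n → (Fin d → Option ℝ) × ℝ) := Measure.pi (fun _ : Fin n => Qstar)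
    with hπ₀def
  set g : (Fin d → Option ℝ) × ℝ → ℝ≥0∞ := fun z => ENNReal.ofReal (wm z / c) with hgdef
  have hgmeas : Measurable g := (hwmeas.div_const c).ennreal_ofReal
  set Ptil : Measure ((Fin d → Option ℝ) × ℝ) := Qstar.withDensity g with hPtildef
  have hint : ∫⁻ z, g z ∂Qstar = 1 := by
    rw [hgdef]
    rw [← ofReal_integral_eq_lintegral_ofReal (hwint.div_const c)
      (Filter.Eventually.of_forall (fun z => div_nonneg (hw0 z) hcpos.le))]
    rw [integral_div, ← hc, div_self (ne_of_gt hcpos), ENNReal.ofReal_one]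
  haveI hPtilprob : IsProbabilityMeasure Ptil := by
    constructor
    rw [hPtildef, withDensity_apply _ MeasurableSet.univ, Measure.restrict_univ]
    exact hint
  haveI : IsProbabilityMeasure π₀ := by
    rw [hπ₀def]; infer_instance
  -- Step 1 : core coverage for the product with density
  have hcore : ENNReal.ofReal (1 - α) ≤ (π₀.prod Ptil) A := by
    -- rewrite as an integral over π₀.prod Qstar
    have h1 : (π₀.prod Ptil) A
        = ∫⁻ p, A.indicator (fun p => g p.2) p ∂(π₀.prod Qstar) := by
      rw [Measure.prod_apply hAmeas]
      have h2 : ∀ u, Ptil (Prod.mk u ⁻¹' A)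
          = ∫⁻ z, A.indicator (fun p => g p.2) (u, z) ∂Qstar := by
        intro u
        rw [hPtildef, withDensity_apply _ (measurable_prodMk_left hAmeas),
          ← lintegral_indicator (measurable_prodMk_left hAmeas)]
        refine lintegral_congr (fun z => ?_)
        simp only [Set.indicator_apply, Set.mem_preimage]
      simp_rw [h2]
      have hFmeas : Measurable (A.indicator (fun p => g p.2)) :=
        (hgmeas.comp measurable_snd).indicator hAmeas
      rw [← lintegral_prod _ hFmeas.aemeasurable]
    rw [h1]
    -- transfer to the pi measure over `Fin (n+1)`
    set ρ : Measure (Fin (n + 1) → (Fin d → Option ℝ) × ℝ) :=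
      Measure.pi (fun _ : Fin (n + 1) => Qstar) with hρdef
    set Ψ : (Fin (n + 1) → (Fin d → Option ℝ) × ℝ) →
        (Fin n → (Fin d → Option ℝ) × ℝ) × ((Fin d → Option ℝ) × ℝ) :=
      fun f => (fun j => f j.castSucc, f (Fin.last n)) with hΨdef
    have hΨmeas : Measurable Ψ :=
      (measurable_pi_lambda _ (fun j => measurable_pi_apply _)).prodMk (measurable_pi_apply _)
    have hΨlaw : Measure.map Ψ ρ = π₀.prod Qstar := by
      have hmp := (measurePreserving_piFinSuccAbove
        (fun _ : Fin (n + 1) => Qstar) (Fin.last n)).map_eq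
      have hcomp : Ψ = Prod.swap ∘
          (MeasurableEquiv.piFinSuccAbove (fun _ : Fin (n + 1) => (Fin d → Option ℝ) × ℝ)
            (Fin.last n)) := by
        funext f
        refine Prod.ext ?_ ?_
        · funext j
          simp [hΨdef, MeasurableEquiv.piFinSuccAbove, Fin.insertNthEquiv,
            Fin.succAbove_last, Fin.init]
        · simp [hΨdef, MeasurableEquiv.piFinSuccAbove, Fin.insertNthEquiv]
      rw [hcomp, ← Measure.map_map measurable_swap
        (MeasurableEquiv.piFinSuccAbove (fun _ : Fin (n + 1) => (Fin d → Option ℝ) × ℝ)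
          (Fin.last n)).measurable,
        hρdef, hmp, Measure.prod_swap]
    have hFmeas : Measurable (A.indicator (fun p => g p.2)) :=
      (hgmeas.comp measurable_snd).indicator hAmeas
    rw [← hΨlaw, lintegral_map hFmeas hΨmeas]
    -- identify the indicator with the `goodSet` indicator of the core lemma
    set goodS : Set (Fin (n + 1) → (Fin d → Option ℝ) × ℝ) :=
      {f : Fin (n + 1) → (Fin d → Option ℝ) × ℝ |
        ((s (f (Fin.last n)) : ℝ) : EReal) ≤
          wQuantile (1 - α) (fun i => (wm (f i) / c) / ∑ j, (wm (f j) / c))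
            (fun i => ((s (f i) : ℝ) : EReal))} with hgoodSdef
    have hptwise : ∀ f : Fin (n + 1) → (Fin d → Option ℝ) × ℝ,
        A.indicator (fun p => g p.2) (Ψ f)
          = goodS.indicator (fun f => ENNReal.ofReal (wm (f (Fin.last n)) / c)) f := by
      intro f
      have hDp : Dp (Ψ f) = ∑ i : Fin (n + 1), wm (f i) / c := by
        rw [Fin.sum_univ_castSucc]
      have hmemiff : Ψ f ∈ A ↔ ((s (f (Fin.last n)) : ℝ) : EReal) ≤
          wQuantile (1 - α) (fun i => (wm (f i) / c) / ∑ j, (wm (f j) / c))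
            (fun i => ((s (f i) : ℝ) : EReal)) := by
        have hreidx : wQuantile (1 - α) (covW (Ψ f)) (covV (Ψ f))
            = wQuantile (1 - α) (fun i : Fin (n + 1) => covW (Ψ f) (finSuccEquivLast i))
              (fun i : Fin (n + 1) => covV (Ψ f) (finSuccEquivLast i)) :=
          (wQuantile_comp_equiv finSuccEquivLast (1 - α) (covW (Ψ f)) (covV (Ψ f))).symm
        have hWeq : (fun i : Fin (n + 1) => covW (Ψ f) (finSuccEquivLast i))
            = fun i : Fin (n + 1) => (wm (f i) / c) / ∑ j, (wm (f j) / c) := by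
          funext i
          induction i using Fin.lastCases with
          | last =>
            rw [finSuccEquivLast_last]
            show (wm ((Ψ f).2) / c) / Dp (Ψ f) = _
            rw [hDp]
          | cast j =>
            rw [finSuccEquivLast_castSucc]
            show (wm ((Ψ f).1 j) / c) / Dp (Ψ f) = _
            rw [hDp]
        have hAiff : Ψ f ∈ A ↔ ((s (f (Fin.last n)) : ℝ) : EReal) ≤
            wQuantile (1 - α) (fun i : Fin (n + 1) => (wm (f i) / c) / ∑ j, (wm (f j) / c))
              (fun i : Fin (n + 1) => covV (Ψ f) (finSuccEquivLast i)) := by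
          rw [hAdef]
          simp only [Set.mem_setOf_eq]
          rw [hreidx, hWeq]
        rw [hAiff]
        refine le_wQuantile_congr (fun i r hrt => ?_)
        induction i using Fin.lastCases with
        | last =>
          rw [finSuccEquivLast_last]
          constructor
          · intro htop
            exact absurd (top_le_iff.1 htop) (by simp)
          · intro hle
            exfalso
            have : s (f (Fin.last n)) ≤ r := by exact_mod_cast hle
            linarith
        | cast j =>
          rw [finSuccEquivLast_castSucc]
          exact Iff.rfl
      by_cases hf : Ψ f ∈ A
      · have hm2 : f ∈ goodS := hmemiff.1 hf
        rw [Set.indicator_of_mem hf, Set.indicator_of_mem hm2]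
      · have hm2 : f ∉ goodS := fun hc' => hf (hmemiff.2 hc')
        rw [Set.indicator_of_notMem hf, Set.indicator_of_notMem hm2]
    calc ENNReal.ofReal (1 - α)
        ≤ ∫⁻ f, goodS.indicator
              (fun f => ENNReal.ofReal (wm (f (Fin.last n)) / c)) f ∂ρ :=
          core_coverage Qstar s wm hs hwmeas hw0 c hcpos hint α hα
      _ = ∫⁻ f, A.indicator (fun p => g p.2) (Ψ f) ∂ρ := by
          refine lintegral_congr (fun f => ?_)
          rw [hptwise f]
  -- Step 2 : total variation comparison
  set secm : (Fin n → (Fin d → Option ℝ) × ℝ) → Set ((Fin d → Option ℝ) × ℝ) :=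
    fun u => Prod.mk u ⁻¹' A with hsecmdef
  have hsec : ∀ u, MeasurableSet (secm u) := fun u => measurable_prodMk_left hAmeas
  have hmPs : Measurable (fun u => Pstar (secm u)) := measurable_measure_prodMk_left hAmeas
  have hmPt : Measurable (fun u => Ptil (secm u)) := measurable_measure_prodMk_left hAmeas
  have hb1 : ∀ S : Set ((Fin d → Option ℝ) × ℝ), (Ptil S).toReal ≤ 1 := fun S => by
    have h := prob_le_one (μ := Ptil) (s := S)
    simpa using ENNReal.toReal_mono ENNReal.one_ne_top h
  have hb2 : ∀ S : Set ((Fin d → Option ℝ) × ℝ), (Pstar S).toReal ≤ 1 := fun S => by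
    have h := prob_le_one (μ := Pstar) (s := S)
    simpa using ENNReal.toReal_mono ENNReal.one_ne_top h
  have htv : ∀ u, (Ptil (secm u)).toReal - tvDist Ptil Pstar ≤ (Pstar (secm u)).toReal := by
    intro u
    have hbdd : BddAbove (Set.range fun A : {A : Set ((Fin d → Option ℝ) × ℝ) //
        MeasurableSet A} => |(Ptil A.1).toReal - (Pstar A.1).toReal|) := by
      refine ⟨2, ?_⟩
      rintro x ⟨Aset, rfl⟩
      have h3 := abs_sub (Ptil Aset.1).toReal (Pstar Aset.1).toReal
      have h4 : |(Ptil Aset.1).toReal| ≤ 1 := by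
        rw [abs_of_nonneg ENNReal.toReal_nonneg]; exact hb1 _
      have h5 : |(Pstar Aset.1).toReal| ≤ 1 := by
        rw [abs_of_nonneg ENNReal.toReal_nonneg]; exact hb2 _
      linarith
    have hcs := le_ciSup hbdd (⟨secm u, hsec u⟩ :
      {A : Set ((Fin d → Option ℝ) × ℝ) // MeasurableSet A})
    have habs := le_trans (le_abs_self ((Ptil (secm u)).toReal - (Pstar (secm u)).toReal)) hcs
    have : tvDist Ptil Pstar = ⨆ A : {A : Set ((Fin d → Option ℝ) × ℝ) // MeasurableSet A},
        |(Ptil A.1).toReal - (Pstar A.1).toReal| := rfl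
    rw [this]
    linarith
  have hintPs : Integrable (fun u => (Pstar (secm u)).toReal) π₀ := by
    refine ⟨hmPs.ennreal_toReal.aestronglyMeasurable, ?_⟩
    refine HasFiniteIntegral.of_bounded (C := 1) (Filter.Eventually.of_forall (fun u => ?_))
    rw [Real.norm_eq_abs, abs_of_nonneg ENNReal.toReal_nonneg]
    exact hb2 _
  have hintPt : Integrable (fun u => (Ptil (secm u)).toReal) π₀ := by
    refine ⟨hmPt.ennreal_toReal.aestronglyMeasurable, ?_⟩
    refine HasFiniteIntegral.of_bounded (C := 1) (Filter.Eventually.of_forall (fun u => ?_))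
    rw [Real.norm_eq_abs, abs_of_nonneg ENNReal.toReal_nonneg]
    exact hb1 _
  have hPs_eq : ((π₀.prod Pstar) A).toReal = ∫ u, (Pstar (secm u)).toReal ∂π₀ := by
    rw [Measure.prod_apply hAmeas]
    rw [← integral_toReal hmPs.aemeasurable (Filter.Eventually.of_forall (fun u =>
      lt_of_le_of_lt prob_le_one ENNReal.one_lt_top))]
  have hPt_eq : ((π₀.prod Ptil) A).toReal = ∫ u, (Ptil (secm u)).toReal ∂π₀ := by
    rw [Measure.prod_apply hAmeas]
    rw [← integral_toReal hmPt.aemeasurable (Filter.Eventually.of_forall (fun u =>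
      lt_of_le_of_lt prob_le_one ENNReal.one_lt_top))]
  have hstep : ((π₀.prod Ptil) A).toReal - tvDist Ptil Pstar ≤ ((π₀.prod Pstar) A).toReal := by
    rw [hPs_eq, hPt_eq]
    have h2 : ∫ u, (Ptil (secm u)).toReal ∂π₀ - tvDist Ptil Pstar
        = ∫ u, ((Ptil (secm u)).toReal - tvDist Ptil Pstar) ∂π₀ := by
      rw [integral_sub hintPt (integrable_const _), integral_const]
      simp
    rw [h2]
    exact integral_mono (hintPt.sub (integrable_const _)) hintPs htv
  have h1a : 1 - α ≤ ((π₀.prod Ptil) A).toReal := by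
    have hfin : (π₀.prod Ptil) A ≠ ⊤ := measure_ne_top _ _
    have h6 := ENNReal.toReal_mono hfin hcore
    rwa [ENNReal.toReal_ofReal (by linarith [hα.2])] at h6
  linarith
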